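/- Let 𝒯 be a minimal vanishing sum of roots of unity of weight d with d prime, containing 1, and suppose d divides the lcm n of the orders of elements of 𝒯. Then 𝒯 consists of all d-th roots of unity, each with multiplicity one, and n = d. -/

import Mathlib

open Polynomial IntermediateField Module

set_option maxHeartbeats 2000000 in
lemma minpoly_eq_cyclotomic_aux {a m : ℕ} (ha : 0 < a) (hm : 0 < m)
    {ζ ξ : ℂ} (hζ : IsPrimitiveRoot ζ a) (hξ : IsPrimitiveRoot ξ m)
    (hco : Nat.Coprime a m) :
    minpoly ℚ⟮ξ⟯ ζ = cyclotomic a ℚ⟮ξ⟯ := by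
  have hζint : IsIntegral ℚ ζ := (hζ.isIntegral ha).tower_top
  have hξint : IsIntegral ℚ ξ := (hξ.isIntegral hm).tower_top
  have hζintK : IsIntegral ℚ⟮ξ⟯ ζ := hζint.tower_top
  have hdvd : minpoly ℚ⟮ξ⟯ ζ ∣ cyclotomic a ℚ⟮ξ⟯ := by
    apply minpoly.dvd
    rw [aeval_def, eval₂_eq_eval_map, map_cyclotomic]
    exact hζ.isRoot_cyclotomic ha
  have hup : (minpoly ℚ⟮ξ⟯ ζ).natDegree ≤ a.totient := by
    simpa [natDegree_cyclotomic] using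
      natDegree_le_of_dvd hdvd (cyclotomic_ne_zero a _)
  have hlow : a.totient ≤ (minpoly ℚ⟮ξ⟯ ζ).natDegree := by
    haveI : FiniteDimensional ℚ ℚ⟮ξ⟯ := adjoin.finiteDimensional hξint
    have hKrank : finrank ℚ ℚ⟮ξ⟯ = m.totient := by
      rw [adjoin.finrank hξint, ← cyclotomic_eq_minpoly_rat hξ hm, natDegree_cyclotomic]
    haveI : FiniteDimensional ℚ⟮ξ⟯ ℚ⟮ξ⟯⟮ζ⟯ := adjoin.finiteDimensional hζintK
    have hMrank : finrank ℚ⟮ξ⟯ ℚ⟮ξ⟯⟮ζ⟯ = (minpoly ℚ⟮ξ⟯ ζ).natDegree :=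
      adjoin.finrank hζintK
    have hχ : IsPrimitiveRoot (ζ * ξ) (a * m) := by
      have hcomm : Commute ζ ξ := mul_comm ζ ξ
      have horder := hcomm.orderOf_mul_eq_mul_orderOf_of_coprime
        (by rw [← hζ.eq_orderOf, ← hξ.eq_orderOf]; exact hco)
      have h0 := IsPrimitiveRoot.orderOf (ζ * ξ)
      rw [horder, ← hζ.eq_orderOf, ← hξ.eq_orderOf] at h0
      exact h0
    have ham : 0 < a * m := Nat.mul_pos ha hm
    have hχint : IsIntegral ℚ (ζ * ξ) := (hχ.isIntegral ham).tower_top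
    haveI : FiniteDimensional ℚ ℚ⟮ζ * ξ⟯ := adjoin.finiteDimensional hχint
    have hχrank : finrank ℚ ℚ⟮ζ * ξ⟯ = (a * m).totient := by
      rw [adjoin.finrank hχint, ← cyclotomic_eq_minpoly_rat hχ ham, natDegree_cyclotomic]
    set N := (ℚ⟮ξ⟯⟮ζ⟯).restrictScalars ℚ with hN
    have hχN : ζ * ξ ∈ N := by
      rw [mem_restrictScalars]
      exact mul_mem (mem_adjoin_simple_self _ ζ)
        (IntermediateField.algebraMap_mem _ (⟨ξ, mem_adjoin_simple_self ℚ ξ⟩ : ℚ⟮ξ⟯))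
    have hle : ℚ⟮ζ * ξ⟯ ≤ N := by
      rw [adjoin_simple_le_iff]; exact hχN
    haveI : FiniteDimensional ℚ N := FiniteDimensional.trans ℚ ℚ⟮ξ⟯ ℚ⟮ξ⟯⟮ζ⟯
    have hNrank : finrank ℚ N = m.totient * (minpoly ℚ⟮ξ⟯ ζ).natDegree := by
      rw [← hKrank, ← hMrank]
      exact (finrank_mul_finrank ℚ ℚ⟮ξ⟯ ℚ⟮ξ⟯⟮ζ⟯).symm
    have hmono : finrank ℚ ℚ⟮ζ * ξ⟯ ≤ finrank ℚ N := by
      have h2 : ℚ⟮ζ * ξ⟯.toSubmodule ≤ N.toSubmodule := hle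
      haveI : Module.Finite ℚ N.toSubmodule := ‹FiniteDimensional ℚ N›
      exact Submodule.finrank_mono h2
    rw [hχrank, hNrank, Nat.totient_mul hco, mul_comm (a.totient)] at hmono
    exact Nat.le_of_mul_le_mul_left hmono (Nat.totient_pos.2 hm)
  exact eq_of_monic_of_associated (minpoly.monic hζintK) (cyclotomic.monic a _)
    (associated_of_dvd_of_natDegree_le hdvd (cyclotomic_ne_zero a _)
      (by rw [natDegree_cyclotomic]; exact hlow))


lemma coeff_equal_of_root {p b : ℕ} (hp : p.Prime) (hb : 0 < b)
    {K : Type*} [Field K] [Algebra K ℂ] {ζ : ℂ}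
    (hmin : minpoly K ζ = cyclotomic (p ^ b) K)
    (c : ℕ → K)
    (hsum : ∑ j ∈ Finset.range (p ^ b), algebraMap K ℂ (c j) * ζ ^ j = 0)
    {r t : ℕ} (hr : r < p ^ (b - 1)) (ht : t < p) :
    c (r + t * p ^ (b - 1)) = c r := by
  set B := p ^ (b - 1) with hB
  have hpb : p ^ b = B * p := by
    rw [hB, ← pow_succ]
    congr 1
    omega
  have hBpos : 0 < B := pow_pos hp.pos _
  have hppos : 2 ≤ p := hp.two_le
  have hlt : ∀ r' t', r' < B → t' < p → r' + t' * B < p ^ b := by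
    intro r' t' h1 h2
    calc r' + t' * B < B + t' * B := by omega
    _ = (t' + 1) * B := by ring
    _ ≤ p * B := Nat.mul_le_mul_right _ (by omega)
    _ = p ^ b := by rw [hpb, mul_comm]
  set D : Polynomial K := ∑ j ∈ Finset.range (p ^ b), C (c j) * X ^ j with hD
  have hcoeff : ∀ k, k < p ^ b → D.coeff k = c k := by
    intro k hk
    rw [hD, finset_sum_coeff]
    simp only [coeff_C_mul, coeff_X_pow, mul_ite, mul_one, mul_zero]
    rw [Finset.sum_ite_eq (Finset.range (p ^ b)) k c]
    simp [hk]
  have haev : Polynomial.aeval ζ D = 0 := by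
    rw [hD]
    simp only [map_sum, map_mul, aeval_C, aeval_X_pow]
    exact hsum
  have hdvd : cyclotomic (p ^ b) K ∣ D := hmin ▸ minpoly.dvd K ζ haev
  obtain ⟨Q, hQ⟩ := hdvd
  by_cases hQ0 : Q = 0
  · rw [hQ0, mul_zero] at hQ
    have h1 := hcoeff _ (hlt r t hr ht)
    have h2 := hcoeff r (lt_of_lt_of_le hr (by rw [hpb]; exact Nat.le_mul_of_pos_right _ hp.pos))
    rw [hQ] at h1 h2
    simp only [coeff_zero] at h1 h2
    rw [← h1, ← h2]
  · have hΦmonic : (cyclotomic (p ^ b) K).Monic := cyclotomic.monic _ _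
    have hΦdeg : (cyclotomic (p ^ b) K).natDegree = B * p - B := by
      rw [natDegree_cyclotomic]
      rcases Nat.exists_eq_succ_of_ne_zero hb.ne' with ⟨b', rfl⟩
      rw [Nat.totient_prime_pow hp (Nat.succ_pos b')]
      have hBb : B = p ^ b' := by rw [hB]; congr 1
      rw [Nat.succ_sub_one, ← hBb, Nat.mul_sub, mul_one, mul_comm]
    have hDle : D.natDegree ≤ p ^ b - 1 := by
      rw [hD]
      apply natDegree_sum_le_of_forall_le
      intro j hj
      apply le_trans (natDegree_C_mul_le _ _)
      rw [natDegree_X_pow]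
      exact Nat.le_sub_one_of_lt (Finset.mem_range.mp hj)
    have hDdeg : D.natDegree < p ^ b :=
      lt_of_le_of_lt hDle (Nat.sub_lt (pow_pos hp.pos b) one_pos)
    have hQdeg : Q.natDegree < B := by
      have hmul := natDegree_mul hΦmonic.ne_zero hQ0
      rw [← hQ, hΦdeg] at hmul
      rw [hmul, hpb] at hDdeg
      have hBle : B ≤ B * p := Nat.le_mul_of_pos_right _ hp.pos
      omega
    have hgeom : cyclotomic (p ^ b) K = ∑ i ∈ Finset.range p, X ^ (B * i) := by
      rcases Nat.exists_eq_succ_of_ne_zero hb.ne' with ⟨b', rfl⟩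
      have hBb : B = p ^ b' := by rw [hB]; congr 1
      rw [cyclotomic_prime_pow_eq_geom_sum hp, hBb]
      exact Finset.sum_congr rfl fun i _ => (pow_mul X (p ^ b') i).symm
    have hkey : ∀ r' t', r' < B → t' < p → D.coeff (r' + t' * B) = Q.coeff r' := by
      intro r' t' h1 h2
      rw [hQ, hgeom, Finset.sum_mul, finset_sum_coeff]
      rw [Finset.sum_eq_single t']
      · rw [mul_comm (X ^ (B * t')) Q, coeff_mul_X_pow', mul_comm B t']
        rw [if_pos (by omega : t' * B ≤ r' + t' * B), Nat.add_sub_cancel]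
      · intro i hi hne
        rw [mul_comm (X ^ (B * i)) Q, coeff_mul_X_pow', mul_comm B i, mul_comm t' B] 
        rcases lt_or_gt_of_ne hne with h | h
        · have hBi : i * B + B ≤ B * t' := by
            have := Nat.mul_le_mul_left B (show i + 1 ≤ t' by omega)
            rw [Nat.mul_add, mul_one, mul_comm B i] at this
            exact this
          rw [if_pos (by omega)]
          apply coeff_eq_zero_of_natDegree_lt
          omega
        · have hBi : B * t' + B ≤ i * B := by
            have := Nat.mul_le_mul_left B (show t' + 1 ≤ i by omega)
            rw [Nat.mul_add, mul_one, mul_comm B i] at this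
            exact this
          rw [if_neg (by omega)]
      · intro h
        exact absurd (Finset.mem_range.mpr h2) h
    have e1 : D.coeff (r + t * B) = Q.coeff r := hkey r t hr ht
    have e2 : D.coeff (r + 0 * B) = Q.coeff r := hkey r 0 hr hp.pos
    rw [hcoeff _ (hlt r t hr ht)] at e1
    rw [hcoeff _ (by simpa using hlt r 0 hr hp.pos)] at e2
    simp only [zero_mul, add_zero] at e2
    rw [e1, ← e2]

open Polynomial IntermediateField Module

lemma multiset_lcm_ne_zero {s : Multiset ℕ} (h : ∀ a ∈ s, a ≠ 0) : s.lcm ≠ 0 := by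
  induction s using Multiset.induction_on with
  | empty => simp [Multiset.lcm_zero]
  | cons a s ih =>
    rw [Multiset.lcm_cons]
    exact Nat.lcm_ne_zero (h _ (Multiset.mem_cons_self _ _))
      (ih fun b hb => h b (Multiset.mem_cons_of_mem hb))

lemma multiset_partition {α : Type*} (T : Multiset α) (f : α → ℕ) (N : ℕ)
    (h : ∀ z ∈ T, f z < N) :
    T = ∑ j ∈ Finset.range N, T.filter (fun z => f z = j) := by
  classical
  ext z
  rw [Multiset.count_sum']
  simp only [Multiset.count_filter]
  by_cases hz : z ∈ T
  · rw [Finset.sum_ite_eq (Finset.range N) (f z) (fun _ => Multiset.count z T)]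
    simp [Finset.mem_range.mpr (h z hz)]
  · simp [Multiset.count_eq_zero_of_notMem hz]

lemma card_finset_sum {α ι : Type*} (s : Finset ι) (f : ι → Multiset α) :
    Multiset.card (∑ i ∈ s, f i) = ∑ i ∈ s, Multiset.card (f i) := by
  classical
  induction s using Finset.induction_on with
  | empty => simp
  | insert _ _ hx ih => simp_all [Finset.sum_insert hx]

lemma sum_finset_sum {β ι : Type*} [AddCommMonoid β] (s : Finset ι) (f : ι → Multiset β) :
    (∑ i ∈ s, f i).sum = ∑ i ∈ s, (f i).sum := by
  classical
  induction s using Finset.induction_on with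
  | empty => simp
  | insert _ _ hx ih => simp_all [Finset.sum_insert hx]

set_option maxHeartbeats 3200000 in
/-- If a minimal vanishing sum of roots of unity of prime weight `d`
contains `1` and `d` divides the lcm `n` of the orders of its elements,
then the sum consists of all `d`-th roots of unity (each with multiplicity
one), and `n = d`. -/
theorem minimal_vanishing_sum_prime_weight (T : Multiset ℂ)
    (hroots : ∀ z ∈ T, ∃ m : ℕ, 0 < m ∧ z ^ m = 1)
    (hsum : T.sum = 0)
    (hmin : ∀ S ≤ T, S.sum = 0 → S = 0 ∨ S = T)
    (hone : (1 : ℂ) ∈ T)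
    (hd : (Multiset.card T).Prime)
    (hdvd : Multiset.card T ∣ (T.map orderOf).lcm) :
    T = Polynomial.nthRoots (Multiset.card T) (1 : ℂ) ∧
      (T.map orderOf).lcm = Multiset.card T := by
  classical
  set p := Multiset.card T with hpcard
  set n := (T.map orderOf).lcm with hndef
  have hp2 : 2 ≤ p := hd.two_le
  have hfin : ∀ z ∈ T, 0 < orderOf z := by
    intro z hz
    obtain ⟨k, hk, hk1⟩ := hroots z hz
    exact (isOfFinOrder_iff_pow_eq_one.mpr ⟨k, hk, hk1⟩).orderOf_pos
  have hn0 : n ≠ 0 := by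
    apply multiset_lcm_ne_zero
    intro a ha
    obtain ⟨z, hz, rfl⟩ := Multiset.mem_map.mp ha
    exact (hfin z hz).ne'
  have hzn : ∀ z ∈ T, z ^ n = 1 := fun z hz =>
    orderOf_dvd_iff_pow_eq_one.mp (Multiset.dvd_lcm (Multiset.mem_map_of_mem _ hz))
  have hz0 : ∀ z ∈ T, z ≠ 0 := by
    intro z hz h0
    have h1 := hzn z hz
    rw [h0, zero_pow hn0] at h1
    exact zero_ne_one h1
  set b := n.factorization p with hbdef
  have hbpos : 0 < b := Nat.Prime.factorization_pos_of_dvd hd hn0 hdvd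
  set m := n / p ^ b with hmdef
  have hnm : p ^ b * m = n := Nat.ordProj_mul_ordCompl_eq_self n p
  have hpm : ¬ p ∣ m := Nat.not_dvd_ordCompl hd hn0
  have hm0 : m ≠ 0 := by
    intro h
    rw [h, mul_zero] at hnm
    exact hn0 hnm.symm
  have hpb0 : p ^ b ≠ 0 := pow_ne_zero _ hd.pos.ne'
  have hcop : Nat.Coprime (p ^ b) m := (hd.coprime_iff_not_dvd.mpr hpm).pow_left b
  haveI : NeZero (p ^ b) := ⟨hpb0⟩
  haveI : NeZero m := ⟨hm0⟩
  set χ := Complex.exp (2 * Real.pi * Complex.I / n) with hχdef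
  have hχ : IsPrimitiveRoot χ n := Complex.isPrimitiveRoot_exp n hn0
  set ζ := χ ^ m with hζdef
  set ξ := χ ^ (p ^ b) with hξdef
  have hζ : IsPrimitiveRoot ζ (p ^ b) :=
    hχ.pow (Nat.pos_of_ne_zero hn0) (by rw [← hnm, mul_comm])
  have hξ : IsPrimitiveRoot ξ m := hχ.pow (Nat.pos_of_ne_zero hn0) hnm.symm
  have hζ0 : ζ ≠ 0 := hζ.ne_zero hpb0
  -- decomposition of elements of T
  have hdecomp : ∀ z ∈ T, ∃ a, a < p ^ b ∧ ∃ w, w ^ m = 1 ∧ z = ζ ^ a * w := by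
    intro z hz
    have hzn' := hzn z hz
    have hz0' := hz0 z hz
    obtain ⟨α, β, hαβ⟩ : ∃ α β : ℤ, (p ^ b : ℤ) * α + (m : ℤ) * β = 1 := by
      refine ⟨Nat.gcdA (p ^ b) m, Nat.gcdB (p ^ b) m, ?_⟩
      have h1 : Nat.gcd (p ^ b) m = 1 := hcop
      have h2 := Nat.gcd_eq_gcd_ab (p ^ b) m
      rw [h1] at h2
      push_cast at h2 ⊢
      linarith
    have hzsplit : z = (z ^ (m : ℤ)) ^ β * (z ^ ((p ^ b : ℕ) : ℤ)) ^ α := by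
      rw [← zpow_mul, ← zpow_mul, ← zpow_add₀ hz0']
      rw [show (m : ℤ) * β + ((p ^ b : ℕ) : ℤ) * α = 1 by push_cast; linarith]
      simp
    have hu : ((z ^ (m : ℤ)) ^ β) ^ (p ^ b) = 1 := by
      rw [← zpow_natCast ((z ^ (m : ℤ)) ^ β) (p ^ b), ← zpow_mul, ← zpow_mul]
      rw [show (m : ℤ) * (β * ((p ^ b : ℕ) : ℤ)) = (n : ℤ) * β by push_cast [← hnm]; ring]
      rw [zpow_mul, zpow_natCast, hzn', one_zpow]
    have hw : ((z ^ ((p ^ b : ℕ) : ℤ)) ^ α) ^ m = 1 := by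
      rw [← zpow_natCast ((z ^ ((p ^ b : ℕ) : ℤ)) ^ α) m, ← zpow_mul, ← zpow_mul]
      rw [show ((p ^ b : ℕ) : ℤ) * (α * (m : ℤ)) = (n : ℤ) * α by push_cast [← hnm]; ring]
      rw [zpow_mul, zpow_natCast, hzn', one_zpow]
    obtain ⟨a, ha, hae⟩ := hζ.eq_pow_of_pow_eq_one hu
    exact ⟨a, ha, (z ^ ((p ^ b : ℕ) : ℤ)) ^ α, hw, by rw [← hae] at hzsplit; exact hzsplit⟩
  have hζm : IsPrimitiveRoot (ζ ^ m) (p ^ b) := hζ.pow_of_coprime m hcop.symm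
  have hinj : ∀ a a' w w', a < p ^ b → a' < p ^ b → w ^ m = 1 → w' ^ m = 1 →
      ζ ^ a * w = ζ ^ a' * w' → a = a' := by
    intro a a' w w' ha ha' hw hw' he
    have e1 : ∀ (a₀ : ℕ) (w₀ : ℂ), w₀ ^ m = 1 → (ζ ^ a₀ * w₀) ^ m = (ζ ^ m) ^ a₀ := by
      intro a₀ w₀ hw₀
      rw [mul_pow, hw₀, mul_one, pow_right_comm]
    have h2 : (ζ ^ m) ^ a = (ζ ^ m) ^ a' := by
      rw [← e1 a w hw, ← e1 a' w' hw', he]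
    exact hζm.pow_inj ha ha' h2
  -- the class function
  set f : ℂ → ℕ := fun z =>
    if h : ∃ a, a < p ^ b ∧ ∃ w, w ^ m = 1 ∧ z = ζ ^ a * w then h.choose else 0 with hfdef
  have hfspec : ∀ z ∈ T, f z < p ^ b ∧ ∃ w, w ^ m = 1 ∧ z = ζ ^ (f z) * w := by
    intro z hz
    have h := hdecomp z hz
    simp only [hfdef, dif_pos h]
    exact ⟨h.choose_spec.1, h.choose_spec.2⟩
  have hf1 : f 1 = 0 := by
    have h1T := hfspec 1 hone
    obtain ⟨w, hw, he⟩ := h1T.2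
    refine hinj _ _ w 1 h1T.1 (pow_pos hd.pos b) hw (one_pow m) ?_
    rw [pow_zero, one_mul, ← he]
  -- class sums
  set cj : ℕ → ℂ := fun j => ((T.filter (fun z => f z = j)).map (fun z => (ζ ^ j)⁻¹ * z)).sum
    with hcjdef
  have hclass_sum : ∀ j, (T.filter (fun z => f z = j)).sum = ζ ^ j * cj j := by
    intro j
    simp only [hcjdef]
    rw [Multiset.sum_map_mul_left, Multiset.map_id', ← mul_assoc,
      mul_inv_cancel₀ (pow_ne_zero j hζ0), one_mul]
  have hcjK : ∀ j, cj j ∈ ℚ⟮ξ⟯ := by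
    intro j
    simp only [hcjdef]
    apply IntermediateField.multiset_sum_mem
    intro x hx
    obtain ⟨z, hz, rfl⟩ := Multiset.mem_map.mp hx
    have hzT := (Multiset.mem_filter.mp hz).1
    have hfz := (Multiset.mem_filter.mp hz).2
    obtain ⟨w, hw, he⟩ := (hfspec z hzT).2
    rw [hfz] at he
    have hxw : (ζ ^ j)⁻¹ * z = w := by
      rw [he, ← mul_assoc, inv_mul_cancel₀ (pow_ne_zero j hζ0), one_mul]
    rw [hxw]
    obtain ⟨i, _, hi⟩ := hξ.eq_pow_of_pow_eq_one hw
    rw [← hi]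
    exact pow_mem (mem_adjoin_simple_self ℚ ξ) i
  set cK : ℕ → ℚ⟮ξ⟯ := fun j => ⟨cj j, hcjK j⟩ with hcKdef
  have hpart : T = ∑ j ∈ Finset.range (p ^ b), T.filter (fun z => f z = j) :=
    multiset_partition T f (p ^ b) (fun z hz => (hfspec z hz).1)
  have hsum_split : ∑ j ∈ Finset.range (p ^ b), (T.filter (fun z => f z = j)).sum = 0 := by
    rw [← sum_finset_sum, ← hpart, hsum]
  have hvanish : ∑ j ∈ Finset.range (p ^ b), algebraMap ℚ⟮ξ⟯ ℂ (cK j) * ζ ^ j = 0 := by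
    rw [← hsum_split]
    apply Finset.sum_congr rfl
    intro j _
    rw [hclass_sum j]
    simp only [hcKdef, IntermediateField.algebraMap_apply]
    ring
  have hmineq : minpoly ℚ⟮ξ⟯ ζ = cyclotomic (p ^ b) ℚ⟮ξ⟯ :=
    minpoly_eq_cyclotomic_aux (pow_pos hd.pos b) (Nat.pos_of_ne_zero hm0) hζ hξ hcop
  have hequal : ∀ r t, r < p ^ (b - 1) → t < p → cj (r + t * p ^ (b - 1)) = cj r := by
    intro r t hr ht
    have h := coeff_equal_of_root hd hbpos hmineq cK hvanish hr ht
    exact congrArg Subtype.val h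
  set B := p ^ (b - 1) with hBdef
  have hBpos : 0 < B := pow_pos hd.pos _
  have hpbB : p ^ b = B * p := by rw [hBdef, ← pow_succ]; congr 1; omega
  set η := ζ ^ B with hηdef
  have hη : IsPrimitiveRoot η p := hζ.pow (pow_pos hd.pos b) hpbB
  have hgeo : ∑ t ∈ Finset.range p, η ^ t = 0 := hη.geom_sum_eq_zero hd.one_lt
  -- the zero subsums U_r
  have hUr_le : ∀ r, r < B →
      (∑ t ∈ Finset.range p, T.filter (fun z => f z = r + t * B)) ≤ T := by
    intro r hr
    have hinj2 : ∀ x ∈ Finset.range p, ∀ y ∈ Finset.range p,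
        r + x * B = r + y * B → x = y := by
      intro x _ y _ hxy
      exact Nat.eq_of_mul_eq_mul_right hBpos (by omega)
    have hsub : (Finset.range p).image (fun t => r + t * B) ⊆ Finset.range (p ^ b) := by
      intro j hj
      obtain ⟨t, ht, rfl⟩ := Finset.mem_image.mp hj
      rw [Finset.mem_range] at ht ⊢
      calc r + t * B < B + t * B := by omega
        _ = (t + 1) * B := by ring
        _ ≤ p * B := Nat.mul_le_mul_right _ (by omega)
        _ = p ^ b := by rw [hpbB, mul_comm]
    have himg : ∑ j ∈ (Finset.range p).image (fun t => r + t * B), T.filter (fun z => f z = j)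
        = ∑ t ∈ Finset.range p, T.filter (fun z => f z = r + t * B) :=
      Finset.sum_image hinj2
    rw [← himg]
    conv_rhs => rw [hpart]
    exact Finset.sum_le_sum_of_subset hsub
  have hUr_sum : ∀ r, r < B →
      (∑ t ∈ Finset.range p, T.filter (fun z => f z = r + t * B)).sum = 0 := by
    intro r hr
    rw [sum_finset_sum]
    have hterm : ∀ t ∈ Finset.range p,
        (T.filter (fun z => f z = r + t * B)).sum = (ζ ^ r * cj r) * η ^ t := by
      intro t ht
      rw [hclass_sum, hequal r t hr (Finset.mem_range.mp ht), pow_add, hηdef, ← pow_mul,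
        mul_comm t B]
      ring
    rw [Finset.sum_congr rfl hterm, ← Finset.mul_sum, hgeo, mul_zero]
  -- every class index is a multiple of B
  have hfmod : ∀ z ∈ T, f z % B = 0 := by
    intro z hz
    by_contra hne
    set r := f z % B with hrdef
    have hrB : r < B := Nat.mod_lt _ hBpos
    have hzU : z ∈ ∑ t ∈ Finset.range p, T.filter (fun z => f z = r + t * B) := by
      rw [Multiset.mem_sum]
      refine ⟨f z / B, Finset.mem_range.mpr ?_, ?_⟩
      · exact Nat.div_lt_of_lt_mul (by rw [← hpbB]; exact (hfspec z hz).1)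
      · rw [Multiset.mem_filter]
        refine ⟨hz, ?_⟩
        rw [hrdef, mul_comm]
        exact (Nat.mod_add_div (f z) B).symm
    rcases hmin _ (hUr_le r hrB) (hUr_sum r hrB) with h0 | hT
    · rw [h0] at hzU
      exact Multiset.notMem_zero z hzU
    · have h1U : (1 : ℂ) ∈ ∑ t ∈ Finset.range p, T.filter (fun z => f z = r + t * B) := by
        rw [hT]; exact hone
      rw [Multiset.mem_sum] at h1U
      obtain ⟨t, ht, h1t⟩ := h1U
      have h10 := (Multiset.mem_filter.mp h1t).2
      rw [hf1] at h10
      omega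
  have hfBt : ∀ z ∈ T, ∃ t, t < p ∧ f z = t * B := by
    intro z hz
    refine ⟨f z / B, ?_, ?_⟩
    · exact Nat.div_lt_of_lt_mul (by rw [← hpbB]; exact (hfspec z hz).1)
    · have h1 := Nat.mod_add_div (f z) B
      have h2 := hfmod z hz
      rw [h2, zero_add] at h1
      rw [mul_comm]
      exact h1.symm
  by_cases hc0 : cj 0 = 0
  · exfalso
    have hT0sum : (T.filter (fun z => f z = 0)).sum = 0 := by
      rw [hclass_sum 0, hc0, mul_zero]
    have h1T0 : (1 : ℂ) ∈ T.filter (fun z => f z = 0) := Multiset.mem_filter.mpr ⟨hone, hf1⟩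
    rcases hmin _ (Multiset.filter_le _ T) hT0sum with h0 | hT
    · rw [h0] at h1T0
      exact Multiset.notMem_zero _ h1T0
    · have hallm : ∀ z ∈ T, z ^ m = 1 := by
        intro z hz
        have hzT0 : z ∈ T.filter (fun z => f z = 0) := by rw [hT]; exact hz
        have hfz0 := (Multiset.mem_filter.mp hzT0).2
        obtain ⟨w, hw, he⟩ := (hfspec z hz).2
        rw [hfz0, pow_zero, one_mul] at he
        rw [he]
        exact hw
      have hnd : n ∣ m := by
        rw [hndef]
        apply Multiset.lcm_dvd.mpr
        intro a ha
        obtain ⟨z, hz, rfl⟩ := Multiset.mem_map.mp ha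
        exact orderOf_dvd_iff_pow_eq_one.mpr (hallm z hz)
      exact hpm (dvd_trans hdvd hnd)
  · -- main case: T is the set of p-th roots of unity
    have hpart2 : T = ∑ t ∈ Finset.range p, T.filter (fun z => f z = t * B) := by
      have h := multiset_partition T (fun z => f z / B) p
        (fun z hz => Nat.div_lt_of_lt_mul (by rw [← hpbB]; exact (hfspec z hz).1))
      have heq : ∀ t ∈ Finset.range p,
          T.filter (fun z => f z / B = t) = T.filter (fun z => f z = t * B) := by
        intro t _
        apply Multiset.filter_congr
        intro z hz
        obtain ⟨t', ht', he⟩ := hfBt z hz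
        rw [he, Nat.mul_div_cancel _ hBpos]
        constructor
        · rintro rfl; rfl
        · intro h'
          exact Nat.eq_of_mul_eq_mul_right hBpos h'
      calc T = ∑ t ∈ Finset.range p, T.filter (fun z => f z / B = t) := h
        _ = ∑ t ∈ Finset.range p, T.filter (fun z => f z = t * B) :=
          Finset.sum_congr rfl heq
    have hcard : ∑ t ∈ Finset.range p, Multiset.card (T.filter (fun z => f z = t * B)) = p := by
      rw [← card_finset_sum, ← hpart2]
    have hne0 : ∀ t ∈ Finset.range p, T.filter (fun z => f z = t * B) ≠ 0 := by
      intro t ht h0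
      have hcs := hclass_sum (t * B)
      rw [h0] at hcs
      simp only [Multiset.sum_zero] at hcs
      have hcj := hequal 0 t hBpos (Finset.mem_range.mp ht)
      rw [zero_add] at hcj
      rw [hcj] at hcs
      rcases mul_eq_zero.mp hcs.symm with h | h
      · exact pow_ne_zero _ hζ0 h
      · exact hc0 h
    have hone_le : ∀ t ∈ Finset.range p, 1 ≤ Multiset.card (T.filter (fun z => f z = t * B)) :=
      fun t ht => Multiset.card_pos.mpr (hne0 t ht)
    have hcard1 : ∀ t ∈ Finset.range p, Multiset.card (T.filter (fun z => f z = t * B)) = 1 := by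
      have h := (Finset.sum_eq_sum_iff_of_le hone_le).mp (by rw [hcard]; simp)
      intro t ht
      exact (h t ht).symm
    have hsingle : ∀ t ∈ Finset.range p,
        T.filter (fun z => f z = t * B) = {ζ ^ (t * B) * cj 0} := by
      intro t ht
      obtain ⟨z, hz⟩ := Multiset.card_eq_one.mp (hcard1 t ht)
      rw [hz]
      have hcs := hclass_sum (t * B)
      rw [hz, Multiset.sum_singleton] at hcs
      have hcj := hequal 0 t hBpos (Finset.mem_range.mp ht)
      rw [zero_add] at hcj
      rw [hcj] at hcs
      rw [hcs]
    have h00 := hsingle 0 (Finset.mem_range.mpr hd.pos)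
    simp only [zero_mul, pow_zero, one_mul] at h00
    have h1T0 : (1 : ℂ) ∈ T.filter (fun z => f z = 0) := Multiset.mem_filter.mpr ⟨hone, hf1⟩
    rw [h00] at h1T0
    have hc1 : cj 0 = 1 := (Multiset.mem_singleton.mp h1T0).symm
    have hTfinal : T = (Multiset.range p).map (fun t => η ^ t) := by
      conv_lhs => rw [hpart2]
      have hterm : ∀ t ∈ Finset.range p,
          T.filter (fun z => f z = t * B) = {η ^ t} := by
        intro t ht
        rw [hsingle t ht, hc1, mul_one, mul_comm t B, pow_mul ζ B t]
      rw [Finset.sum_congr rfl hterm]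
      rw [Finset.sum_eq_multiset_sum]
      rw [Finset.range_val]
      rw [show (Multiset.range p).map (fun t => ({η ^ t} : Multiset ℂ))
          = ((Multiset.range p).map (fun t => η ^ t)).map (fun a => ({a} : Multiset ℂ)) by
        rw [Multiset.map_map]; rfl]
      exact Multiset.sum_map_singleton _
    have hz_pow : ∀ z ∈ T, z ^ p = 1 := by
      intro z hz
      rw [hTfinal] at hz
      obtain ⟨t, ht, rfl⟩ := Multiset.mem_map.mp hz
      rw [← pow_mul, mul_comm, pow_mul, hη.pow_eq_one, one_pow]
    constructor
    · rw [hη.nthRoots_eq (one_pow p), hTfinal]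
      congr 1
      funext t
      rw [mul_one]
    · apply Nat.dvd_antisymm _ hdvd
      apply Multiset.lcm_dvd.mpr
      intro a ha
      obtain ⟨z, hz, rfl⟩ := Multiset.mem_map.mp ha
      exact orderOf_dvd_iff_pow_eq_one.mpr (hz_pow z hz)
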